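/- For every p ≥ 1 and all real numbers a, b ≥ 0, (a + b)^p ≤ a^p + 2^p·a^{p−1}·b + 4^p·b^p. -/

import Mathlib

open Real

/-- For `p ≥ 1` and `a, b ≥ 0`,
`(a+b)^p ≤ a^p + 2^p a^{p-1} b + 4^p b^p` (real powers, so `0^0 = 1`). -/
theorem add_rpow_le (p a b : ℝ) (hp : 1 ≤ p) (ha : 0 ≤ a) (hb : 0 ≤ b) :
    (a + b) ^ p ≤ a ^ p + 2 ^ p * a ^ (p - 1) * b + 4 ^ p * b ^ p := by
  have hp0 : (0:ℝ) < p := lt_of_lt_of_le one_pos hp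
  rcases le_or_gt b a with hba | hab
  · rcases eq_or_lt_of_le ha with h | ha0
    · -- a = 0, hence b = 0
      have hb0 : b = 0 := le_antisymm (h ▸ hba) hb
      subst hb0
      rw [← h]
      simp [Real.zero_rpow hp0.ne']
    · -- 0 < a, use convexity of x ^ p
      set t : ℝ := b / a with ht
      have ht0 : 0 ≤ t := div_nonneg hb ha
      have ht1 : t ≤ 1 := (div_le_one ha0).2 hba
      have hconv := (convexOn_rpow hp).2 (Set.mem_Ici.2 (zero_le_one (α := ℝ)))
        (Set.mem_Ici.2 (by norm_num : (0:ℝ) ≤ 2)) (by linarith : (0:ℝ) ≤ 1 - t) ht0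
        (by ring)
      simp only [smul_eq_mul, Real.one_rpow] at hconv
      have hkey : (1 + t) ^ p ≤ (1 - t) + t * 2 ^ p := by
        have : (1 - t) * 1 + t * 2 = 1 + t := by ring
        rwa [this, mul_one] at hconv
      have hb_eq : b = a * t := by rw [ht]; field_simp
      have heq : (a + b) ^ p = a ^ p * (1 + t) ^ p := by
        rw [← Real.mul_rpow ha (by linarith), hb_eq]; ring_nf
      have hap : 0 ≤ a ^ p := Real.rpow_nonneg ha p
      have hat : a ^ p * t = a ^ (p - 1) * b := by
        rw [Real.rpow_sub ha0, Real.rpow_one, hb_eq, ht]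
        field_simp
      have h1 : (a + b) ^ p ≤ a ^ p * ((1 - t) + t * 2 ^ p) := by
        rw [heq]; exact mul_le_mul_of_nonneg_left hkey hap
      have h4 : (0:ℝ) ≤ 4 ^ p * b ^ p := by positivity
      have hexp : a ^ p * (1 - t + t * 2 ^ p)
          = a ^ p - a ^ p * t + 2 ^ p * (a ^ p * t) := by ring
      rw [hexp, hat] at h1
      have h5 : 0 ≤ a ^ p * t := mul_nonneg hap ht0
      linarith
  · -- a < b : (a+b)^p ≤ (2b)^p ≤ 4^p b^p
    have h1 : (a + b) ^ p ≤ (2 * b) ^ p :=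
      Real.rpow_le_rpow (by linarith) (by linarith) hp0.le
    have h2 : (2 * b) ^ p = 2 ^ p * b ^ p := Real.mul_rpow (by norm_num) hb
    have h3 : (2:ℝ) ^ p ≤ 4 ^ p := Real.rpow_le_rpow (by norm_num) (by norm_num) hp0.le
    have hbp : 0 ≤ b ^ p := Real.rpow_nonneg hb p
    have h5 : (0:ℝ) ≤ a ^ p := Real.rpow_nonneg ha p
    have h6 : (0:ℝ) ≤ 2 ^ p * a ^ (p - 1) * b := by positivity
    nlinarith
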